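/- The baseline formulation and the nonconvex formulation have the same optimal objective value: the infimum of Σ_{k ∈ V_agt} Σ_{e ∈ E} l_{e,k} over feasible points of the baseline formulation equals the infimum of Σ_{k ∈ V_agt} Σ_{e ∈ E} l_{e,k} over feasible points of the nonconvex formulation. -/
import Mathlib


open scoped BigOperators Classical

noncomputable section

/-- The Euclidean plane ℝ². -/
abbrev Plane := EuclideanSpace ℝ (Fin 2)

/-- Nodes of the graph: `Sum.inl i` is the segment node `i ∈ V_seg`,
`Sum.inr false` is the depot `s`, and `Sum.inr true` is the depot copy `s'`. -/
abbrev Node (ι : Type*) := ι ⊕ Bool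

/-- The data of an MA-MT-TSP instance: a finite type `ι` of segment nodes, a finite
type `υ` of targets, a cluster assignment `cl` whose surjectivity expresses that every
cluster is nonempty, time windows `tlo i ≤ thi i`, start positions `pos`, velocities
`vel` (vanishing at the depot and its copy), a maximum speed `vmax > 0`, and a number
of agents `m ≥ 1`. -/
structure MTData (ι υ : Type*) where
  cl : ι → υ
  cl_surj : Function.Surjective cl
  tlo : Node ι → ℝ
  thi : Node ι → ℝ
  tw : ∀ i, tlo i ≤ thi i
  pos : Node ι → Plane
  vel : Node ι → Plane
  vel_s : vel (Sum.inr false) = 0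
  vel_s' : vel (Sum.inr true) = 0
  vmax : ℝ
  vmax_pos : 0 < vmax
  m : ℕ
  m_pos : 1 ≤ m

variable {ι υ : Type*} [Fintype ι] [Fintype υ]

/-- The edge relation: from the depot `s` to every segment node, between segment nodes
in different clusters, and from every segment node to the depot copy `s'`. -/
def isEdge (D : MTData ι υ) : Node ι → Node ι → Prop
  | Sum.inr false, Sum.inl _ => True
  | Sum.inl i, Sum.inl j => D.cl i ≠ D.cl j
  | Sum.inl _, Sum.inr true => True
  | _, _ => False

/-- The edge set `E` as a finite set of ordered pairs of nodes. -/
def edges (D : MTData ι υ) : Finset (Node ι × Node ι) :=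
  Finset.univ.filter fun e => isEdge D e.1 e.2

/-- `E_i^in`: the edges of `E` entering node `i`. -/
def inE (D : MTData ι υ) (i : Node ι) : Finset (Node ι × Node ι) :=
  (edges D).filter fun e => e.2 = i

/-- `E_i^out`: the edges of `E` exiting node `i`. -/
def outE (D : MTData ι υ) (i : Node ι) : Finset (Node ι × Node ι) :=
  (edges D).filter fun e => e.1 = i

/-- A point of the nonconvex formulation: edge variables `y`, `l`, `lxy`, `zp`, `zt`,
`zp'`, `zt'` for each edge and agent, and node variables `t`, `p` for each node and
agent.  Agents are indexed by `Fin m`. -/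
structure NCPoint (ι : Type*) (m : ℕ) where
  y : Node ι × Node ι → Fin m → ℝ
  l : Node ι × Node ι → Fin m → ℝ
  lxy : Node ι × Node ι → Fin m → Plane
  zp : Node ι × Node ι → Fin m → Plane
  zt : Node ι × Node ι → Fin m → ℝ
  zp' : Node ι × Node ι → Fin m → Plane
  zt' : Node ι × Node ι → Fin m → ℝ
  t : Node ι → Fin m → ℝ
  p : Node ι → Fin m → Plane

variable {ι υ : Type*} [Fintype ι] [Fintype υ]

/-- Feasibility for the nonconvex formulation. -/
def NCFeas (D : MTData ι υ) (P : NCPoint ι D.m) : Prop :=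
  (∀ e ∈ edges D, ∀ k, P.y e k = 0 ∨ P.y e k = 1) ∧
  (∀ e ∈ edges D, ∀ k, 0 ≤ P.l e k) ∧
  (∀ k, ∑ e ∈ outE D (Sum.inr false), P.y e k ≤ 1) ∧
  (∀ k, ∑ e ∈ inE D (Sum.inr true), P.y e k ≤ 1) ∧
  (∀ u : υ, ∑ k, ∑ i ∈ Finset.univ.filter (fun i => D.cl i = u),
      ∑ e ∈ inE D (Sum.inl i), P.y e k = 1) ∧
  (∀ i : ι, ∀ k, ∑ e ∈ inE D (Sum.inl i), P.y e k = ∑ e ∈ outE D (Sum.inl i), P.y e k) ∧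
  (∀ i : Node ι, ∀ k, D.tlo i ≤ P.t i k ∧ P.t i k ≤ D.thi i) ∧
  (∀ i : Node ι, ∀ k, P.p i k = D.pos i + (P.t i k - D.tlo i) • D.vel i) ∧
  (∀ e ∈ edges D, ∀ k,
    P.zp e k = P.y e k • P.p e.1 k ∧
    P.zt e k = P.y e k * P.t e.1 k ∧
    P.zp' e k = P.y e k • P.p e.2 k ∧
    P.zt' e k = P.y e k * P.t e.2 k ∧
    P.l e k ≤ D.vmax * (P.zt' e k - P.zt e k) ∧
    P.lxy e k = P.zp' e k - P.zp e k ∧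
    ‖P.lxy e k‖ ^ 2 ≤ P.l e k ^ 2)

/-- Objective of the nonconvex formulation. -/
def NCObj (D : MTData ι υ) (P : NCPoint ι D.m) : ℝ :=
  ∑ k, ∑ e ∈ edges D, P.l e k

/-- A point of the MICP formulation: a single set of edge variables, together with the
integer depot flow `α` (stated as a real number required to be integral). -/
structure MICPPoint (ι : Type*) where
  y : Node ι × Node ι → ℝ
  l : Node ι × Node ι → ℝ
  lxy : Node ι × Node ι → Plane
  zp : Node ι × Node ι → Plane
  zt : Node ι × Node ι → ℝ
  zp' : Node ι × Node ι → Plane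
  zt' : Node ι × Node ι → ℝ
  α : ℝ

/-- Feasibility for the MICP formulation. -/
def MICPFeas (D : MTData ι υ) (Q : MICPPoint ι) : Prop :=
  (∀ e ∈ edges D, Q.y e = 0 ∨ Q.y e = 1) ∧
  (∀ e ∈ edges D, 0 ≤ Q.l e) ∧
  (∃ n : ℤ, Q.α = n) ∧ (1 ≤ Q.α) ∧ (Q.α ≤ (D.m : ℝ)) ∧
  (∑ e ∈ outE D (Sum.inr false), Q.y e = Q.α) ∧
  (∑ e ∈ inE D (Sum.inr true), Q.y e = Q.α) ∧
  (∀ u : υ, ∑ i ∈ Finset.univ.filter (fun i => D.cl i = u),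
      ∑ e ∈ inE D (Sum.inl i), Q.y e = 1) ∧
  (∀ i : ι, ∑ e ∈ inE D (Sum.inl i), Q.y e = ∑ e ∈ outE D (Sum.inl i), Q.y e) ∧
  (∀ i : ι, ∑ e ∈ inE D (Sum.inl i), Q.zt' e = ∑ e ∈ outE D (Sum.inl i), Q.zt e) ∧
  (∀ e ∈ edges D,
    Q.y e * D.tlo e.1 ≤ Q.zt e ∧ Q.zt e ≤ Q.y e * D.thi e.1 ∧
    Q.y e * D.tlo e.2 ≤ Q.zt' e ∧ Q.zt' e ≤ Q.y e * D.thi e.2 ∧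
    Q.zp e = Q.zt e • D.vel e.1 + Q.y e • (D.pos e.1 - D.tlo e.1 • D.vel e.1) ∧
    Q.zp' e = Q.zt' e • D.vel e.2 + Q.y e • (D.pos e.2 - D.tlo e.2 • D.vel e.2) ∧
    Q.l e ≤ D.vmax * (Q.zt' e - Q.zt e) ∧
    Q.lxy e = Q.zp' e - Q.zp e ∧
    ‖Q.lxy e‖ ^ 2 ≤ Q.l e ^ 2)

/-- Objective of the MICP formulation. -/
def MICPObj (D : MTData ι υ) (Q : MICPPoint ι) : ℝ :=
  ∑ e ∈ edges D, Q.l e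

/-- A point of the baseline formulation: edge variables `y`, `l`, `lbar`, `lxy` for
each edge and agent, and visit-time variables `t` for each node and agent. -/
structure BasePoint (ι : Type*) (m : ℕ) where
  y : Node ι × Node ι → Fin m → ℝ
  l : Node ι × Node ι → Fin m → ℝ
  lbar : Node ι × Node ι → Fin m → ℝ
  lxy : Node ι × Node ι → Fin m → Plane
  t : Node ι → Fin m → ℝ

/-- Feasibility for the baseline (big-M) formulation, with time horizon `T` and
big-M distance constant `R`. -/
def BaseFeas (D : MTData ι υ) (T R : ℝ) (P : BasePoint ι D.m) : Prop :=
  (∀ e ∈ edges D, ∀ k, P.y e k = 0 ∨ P.y e k = 1) ∧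
  (∀ e ∈ edges D, ∀ k, 0 ≤ P.l e k) ∧
  (∀ e ∈ edges D, ∀ k, 0 ≤ P.lbar e k) ∧
  (∀ k, ∑ e ∈ outE D (Sum.inr false), P.y e k ≤ 1) ∧
  (∀ k, ∑ e ∈ inE D (Sum.inr true), P.y e k ≤ 1) ∧
  (∀ u : υ, ∑ k, ∑ i ∈ Finset.univ.filter (fun i => D.cl i = u),
      ∑ e ∈ inE D (Sum.inl i), P.y e k = 1) ∧
  (∀ i : ι, ∀ k, ∑ e ∈ inE D (Sum.inl i), P.y e k = ∑ e ∈ outE D (Sum.inl i), P.y e k) ∧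
  (∀ i : Node ι, ∀ k, D.tlo i ≤ P.t i k ∧ P.t i k ≤ D.thi i) ∧
  (∀ e ∈ edges D, ∀ k,
    P.l e k ≤ D.vmax * (P.t e.2 k - P.t e.1 k + T * (1 - P.y e k)) ∧
    P.lxy e k = (D.pos e.2 + (P.t e.2 k - D.tlo e.2) • D.vel e.2)
      - (D.pos e.1 + (P.t e.1 k - D.tlo e.1) • D.vel e.1) ∧
    P.lbar e k = P.l e k + R * (1 - P.y e k) ∧
    ‖P.lxy e k‖ ^ 2 ≤ P.lbar e k ^ 2)

/-- Objective of the baseline formulation. -/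
def BaseObj (D : MTData ι υ) (P : BasePoint ι D.m) : ℝ :=
  ∑ k, ∑ e ∈ edges D, P.l e k

/-- From a feasible nonconvex point, construct a feasible baseline point with the
same objective value. -/
lemma nc_to_base {ι υ : Type*} [Fintype ι] [Fintype υ] (D : MTData ι υ) (T R : ℝ)
    (hT : 0 < T) (hTlo : ∀ i : Node ι, 0 ≤ D.tlo i) (hThi : ∀ i : Node ι, D.thi i ≤ T)
    (hR : 0 < R)
    (hRbound : ∀ i j : Node ι, ∀ (p q : Plane) (t t' : ℝ),
      (D.tlo i ≤ t ∧ t ≤ D.thi i ∧ p = D.pos i + (t - D.tlo i) • D.vel i) →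
      (D.tlo j ≤ t' ∧ t' ≤ D.thi j ∧ q = D.pos j + (t' - D.tlo j) • D.vel j) →
      ‖p - q‖ ≤ R)
    (P : NCPoint ι D.m) (h : NCFeas D P) :
    ∃ B : BasePoint ι D.m, BaseFeas D T R B ∧ BaseObj D B = NCObj D P := by
  obtain ⟨hy, hl, h3, h4, h5, h6, ht, hp, hedge⟩ := h
  refine ⟨⟨P.y, P.l, fun e k => P.l e k + R * (1 - P.y e k),
    fun e k => (D.pos e.2 + (P.t e.2 k - D.tlo e.2) • D.vel e.2)
      - (D.pos e.1 + (P.t e.1 k - D.tlo e.1) • D.vel e.1), P.t⟩, ?_, rfl⟩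
  refine ⟨hy, hl, ?_, h3, h4, h5, h6, ht, ?_⟩
  · intro e he k
    rcases hy e he k with h0 | h1
    · have := hl e he k
      simp only [h0]
      nlinarith
    · simp only [h1]
      have := hl e he k
      nlinarith
  · intro e he k
    dsimp only
    obtain ⟨hzp, hzt, hzp', hzt', hlle, hlxy, hnorm⟩ := hedge e he k
    rcases hy e he k with h0 | h1
    · -- y = 0 : l = 0
      have hl0 : P.l e k = 0 := by
        have h1 := hl e he k
        have h2 := hlle
        rw [hzt, hzt', h0] at h2
        simp at h2
        linarith
      have hnn : 0 ≤ P.t e.2 k - P.t e.1 k + T * (1 - P.y e k) := by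
        have h1 := (ht e.1 k).2
        have h2 := (ht e.2 k).1
        have h3 := hTlo e.2
        have h4 := hThi e.1
        rw [h0]
        nlinarith
      refine ⟨?_, rfl, rfl, ?_⟩
      · rw [hl0]; exact mul_nonneg D.vmax_pos.le hnn
      · have hb : ‖(D.pos e.2 + (P.t e.2 k - D.tlo e.2) • D.vel e.2)
            - (D.pos e.1 + (P.t e.1 k - D.tlo e.1) • D.vel e.1)‖ ≤ R :=
          hRbound e.2 e.1 _ _ (P.t e.2 k) (P.t e.1 k)
            ⟨(ht e.2 k).1, (ht e.2 k).2, rfl⟩ ⟨(ht e.1 k).1, (ht e.1 k).2, rfl⟩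
        have hval : P.l e k + R * (1 - P.y e k) = R := by rw [hl0, h0]; ring
        rw [hval]
        exact pow_le_pow_left₀ (norm_nonneg _) hb 2
    · -- y = 1
      have hzt1 : P.zt e k = P.t e.1 k := by rw [hzt, h1, one_mul]
      have hzt'1 : P.zt' e k = P.t e.2 k := by rw [hzt', h1, one_mul]
      have hlxyeq : P.lxy e k = (D.pos e.2 + (P.t e.2 k - D.tlo e.2) • D.vel e.2)
          - (D.pos e.1 + (P.t e.1 k - D.tlo e.1) • D.vel e.1) := by
        rw [hlxy, hzp', hzp, h1, one_smul, one_smul, hp e.1 k, hp e.2 k]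
      refine ⟨?_, rfl, rfl, ?_⟩
      · rw [hzt1, hzt'1] at hlle
        rw [h1]
        simpa using hlle
      · have hval : P.l e k + R * (1 - P.y e k) = P.l e k := by rw [h1]; ring
        rw [hval, ← hlxyeq]
        exact hnorm

/-- From a feasible baseline point, construct a feasible nonconvex point with
objective value at most the baseline objective value. -/
lemma base_to_nc {ι υ : Type*} [Fintype ι] [Fintype υ] (D : MTData ι υ) (T R : ℝ)
    (B : BasePoint ι D.m) (h : BaseFeas D T R B) :
    ∃ P : NCPoint ι D.m, NCFeas D P ∧ NCObj D P ≤ BaseObj D B := by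
  obtain ⟨hy, hl, hlbar, h3, h4, h5, h6, ht, hedge⟩ := h
  refine ⟨⟨B.y, fun e k => B.y e k * B.l e k,
    fun e k => B.y e k • ((D.pos e.2 + (B.t e.2 k - D.tlo e.2) • D.vel e.2)
      - (D.pos e.1 + (B.t e.1 k - D.tlo e.1) • D.vel e.1)),
    fun e k => B.y e k • (D.pos e.1 + (B.t e.1 k - D.tlo e.1) • D.vel e.1),
    fun e k => B.y e k * B.t e.1 k,
    fun e k => B.y e k • (D.pos e.2 + (B.t e.2 k - D.tlo e.2) • D.vel e.2),
    fun e k => B.y e k * B.t e.2 k,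
    B.t, fun i k => D.pos i + (B.t i k - D.tlo i) • D.vel i⟩, ?_, ?_⟩
  · refine ⟨hy, ?_, h3, h4, h5, h6, ht, fun i k => rfl, ?_⟩
    · intro e he k
      rcases hy e he k with h0 | h1
      · simp [h0]
      · simp only [h1, one_mul]; exact hl e he k
    · intro e he k
      obtain ⟨hle, hlxy, hbar, hnorm⟩ := hedge e he k
      refine ⟨rfl, rfl, rfl, rfl, ?_, ?_, ?_⟩
      · rcases hy e he k with h0 | h1
        · simp [h0]
        · simp only [h1, one_mul]
          have : T * (1 - B.y e k) = 0 := by rw [h1]; ring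
          rw [this, add_zero] at hle
          exact hle
      · simp only [smul_sub]
      · rcases hy e he k with h0 | h1
        · simp [h0]
        · simp only [h1, one_smul, one_mul]
          have hbar1 : B.lbar e k = B.l e k := by rw [hbar, h1]; ring
          rw [← hlxy]
          rw [hbar1] at hnorm
          exact hnorm
  · unfold NCObj BaseObj
    refine Finset.sum_le_sum fun k _ => Finset.sum_le_sum fun e he => ?_
    dsimp only
    rcases hy e he k with h0 | h1
    · rw [h0, zero_mul]; exact hl e he k
    · rw [h1, one_mul]

/-- The baseline (big-M) formulation and the nonconvex formulation
have the same optimal objective value, for any time horizon `T > 0` containing all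
time windows, and any `R > 0` bounding the distance between any two positions
attainable on the trajectory segments. -/
theorem baseline_optimal_value_eq_nonconvex_optimal_value
    {ι υ : Type*} [Fintype ι] [Fintype υ] (D : MTData ι υ) (T R : ℝ)
    (hT : 0 < T) (hTlo : ∀ i : Node ι, 0 ≤ D.tlo i) (hThi : ∀ i : Node ι, D.thi i ≤ T)
    (hR : 0 < R)
    (hRbound : ∀ i j : Node ι, ∀ (p q : Plane) (t t' : ℝ),
      (D.tlo i ≤ t ∧ t ≤ D.thi i ∧ p = D.pos i + (t - D.tlo i) • D.vel i) →
      (D.tlo j ≤ t' ∧ t' ≤ D.thi j ∧ q = D.pos j + (t' - D.tlo j) • D.vel j) →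
      ‖p - q‖ ≤ R) :
    sInf {c : ℝ | ∃ P : BasePoint ι D.m, BaseFeas D T R P ∧ BaseObj D P = c} =
      sInf {c : ℝ | ∃ P : NCPoint ι D.m, NCFeas D P ∧ NCObj D P = c} := by
  set A := {c : ℝ | ∃ P : BasePoint ι D.m, BaseFeas D T R P ∧ BaseObj D P = c} with hA
  set Bs := {c : ℝ | ∃ P : NCPoint ι D.m, NCFeas D P ∧ NCObj D P = c} with hB
  have hAnn : ∀ c ∈ A, 0 ≤ c := by
    rintro c ⟨P, hP, rfl⟩
    exact Finset.sum_nonneg fun k _ => Finset.sum_nonneg fun e he => hP.2.1 e he k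
  have hBnn : ∀ c ∈ Bs, 0 ≤ c := by
    rintro c ⟨P, hP, rfl⟩
    exact Finset.sum_nonneg fun k _ => Finset.sum_nonneg fun e he => hP.2.1 e he k
  have hBA : ∀ c ∈ Bs, c ∈ A := by
    rintro c ⟨P, hP, rfl⟩
    obtain ⟨Bp, hBp, hobj⟩ := nc_to_base D T R hT hTlo hThi hR hRbound P hP
    exact ⟨Bp, hBp, hobj⟩
  have hAB : ∀ c ∈ A, ∃ c' ∈ Bs, c' ≤ c := by
    rintro c ⟨P, hP, rfl⟩
    obtain ⟨Q, hQ, hobj⟩ := base_to_nc D T R P hP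
    exact ⟨NCObj D Q, ⟨Q, hQ, rfl⟩, hobj⟩
  rcases Set.eq_empty_or_nonempty Bs with hE | hNE
  · have hAE : A = ∅ := by
      by_contra hne
      obtain ⟨c, hc⟩ := Set.nonempty_iff_ne_empty.mpr hne
      obtain ⟨c', hc', _⟩ := hAB c hc
      rw [hE] at hc'
      exact hc'
    rw [hE, hAE]
  · have hANE : A.Nonempty := by
      obtain ⟨c, hc⟩ := hNE
      exact ⟨c, hBA c hc⟩
    have hAbdd : BddBelow A := ⟨0, hAnn⟩
    have hBbdd : BddBelow Bs := ⟨0, hBnn⟩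
    apply le_antisymm
    · exact le_csInf hNE fun c hc => csInf_le hAbdd (hBA c hc)
    · refine le_csInf hANE fun c hc => ?_
      obtain ⟨c', hc', hle⟩ := hAB c hc
      exact (csInf_le hBbdd hc').trans hle

end
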